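/- Let f : F_q^n → F_q be a k-junta and α ∈ F_q^n with f̂(α) ≠ 0. Let U be uniform on F_q^n and U′ an independent uniform element of F_q. Then max over nonzero a ∈ F_q of |E[e(a·(f(U) − χ_α(U)))]| ≥ 1/q^{k+1}. -/

import Mathlib

/-- The additive character `e(a) = exp(2πi·Tr(a)/p)` of a finite field of characteristic `p`. -/
noncomputable def ec (p : ℕ) {F : Type*} [Field F] [Algebra (ZMod p) F] (a : F) : ℂ :=
  Complex.exp (2 * Real.pi * Complex.I * ((Algebra.trace (ZMod p) F a).val : ℂ) / p)

/-- The linear function `χ_α(x) = Σ_i α_i x_i` over `F_q`. -/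
def chi {F : Type*} [Field F] {n : ℕ} (α x : Fin n → F) : F := ∑ i, α i * x i

section helpers
set_option linter.unusedSectionVars false
variable (p : ℕ) [Fact p.Prime] {F : Type*} [Field F] [Fintype F] [Algebra (ZMod p) F]

noncomputable def zt (p : ℕ) : ℂ := Complex.exp (2 * Real.pi * Complex.I / p)

lemma zt_prim : IsPrimitiveRoot (zt p) p :=
  Complex.isPrimitiveRoot_exp p (Nat.Prime.ne_zero Fact.out)

lemma ec_eq_pow (a : F) : ec p a = zt p ^ (Algebra.trace (ZMod p) F a).val := by
  rw [ec, zt, ← Complex.exp_nat_mul]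
  ring_nf

lemma zt_pow_p : zt p ^ p = 1 := (zt_prim p).pow_eq_one

lemma zt_pow_mod (m : ℕ) : zt p ^ (m % p) = zt p ^ m := by
  conv_rhs => rw [← Nat.mod_add_div m p, pow_add, pow_mul, zt_pow_p, one_pow, mul_one]

lemma ec_add (a b : F) : ec p (a + b) = ec p a * ec p b := by
  rw [ec_eq_pow, ec_eq_pow, ec_eq_pow, ← pow_add, map_add, ZMod.val_add, zt_pow_mod]

lemma ec_zero : ec p (0 : F) = 1 := by
  simp [ec]

lemma ec_abs (a : F) : ‖ec p a‖ = 1 := by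
  have h0 : zt p = Complex.exp (((2 * Real.pi / p : ℝ) : ℂ) * Complex.I) := by
    rw [zt]; push_cast; ring_nf
  have h1 : ‖zt p‖ = 1 := by
    rw [h0, Complex.norm_exp_ofReal_mul_I]
  rw [ec_eq_pow, norm_pow, h1, one_pow]

lemma ec_ne_one {a : F} (h : Algebra.trace (ZMod p) F a ≠ 0) : ec p a ≠ 1 := by
  rw [ec_eq_pow]
  intro hh
  have hd : p ∣ (Algebra.trace (ZMod p) F a).val := ((zt_prim p).pow_eq_one_iff_dvd _).1 hh
  have hlt : (Algebra.trace (ZMod p) F a).val < p := ZMod.val_lt _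
  have := Nat.eq_zero_of_dvd_of_lt hd hlt
  exact h (by rwa [← ZMod.val_eq_zero])

lemma exists_tr {s : F} (hs : s ≠ 0) : ∃ b : F, Algebra.trace (ZMod p) F (s * b) ≠ 0 := by
  have hc : CharP F p := charP_of_injective_algebraMap (algebraMap (ZMod p) F).injective p
  have h : ringChar F = p := ringChar.eq F p
  subst h
  exact FiniteField.trace_to_zmod_nondegenerate F hs

lemma sum_ec_zero {s : F} (hs : s ≠ 0) : ∑ a : F, ec p (a * s) = 0 := by
  obtain ⟨b, hb⟩ := exists_tr p hs
  have hne : ec p (b * s) ≠ 1 := ec_ne_one p (by rwa [mul_comm])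
  have hre : ∑ a : F, ec p ((a + b) * s) = ∑ a : F, ec p (a * s) :=
    Fintype.sum_equiv (Equiv.addRight b) _ _ (fun a => rfl)
  have hre2 : ∑ a : F, ec p ((a + b) * s) = ec p (b * s) * ∑ a : F, ec p (a * s) := by
    rw [Finset.mul_sum]
    refine Finset.sum_congr rfl (fun a _ => ?_)
    rw [add_mul, ec_add, mul_comm]
  have : (ec p (b * s) - 1) * ∑ a : F, ec p (a * s) = 0 := by
    rw [sub_mul, one_mul, ← hre2, hre, sub_self]
  rcases mul_eq_zero.1 this with h | h
  · exact absurd (sub_eq_zero.1 h) hne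
  · exact h

lemma sum_ec_ite [DecidableEq F] (s : F) :
    ∑ a : F, ec p (a * s) = if s = 0 then (Fintype.card F : ℂ) else 0 := by
  split_ifs with h
  · subst h; simp [ec_zero]
  · exact sum_ec_zero p h

end helpers

/-- If `f : F_q^n → F_q` is a `k`-junta and `f̂(α) = E[e(f(U) − χ_α(U))] ≠ 0`,
then `max_{a ≠ 0} |E[e(a·(f(U) − χ_α(U)))]| ≥ 1/q^{k+1}` (`U` uniform on `F_q^n`). -/
theorem stmt_15 (p ℓ : ℕ) [Fact p.Prime] {F : Type*} [Field F] [Fintype F]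
    [Algebra (ZMod p) F] (hq : Fintype.card F = p ^ ℓ) {n k : ℕ}
    (f : (Fin n → F) → F)
    (hjunta : ∃ S : Finset (Fin n), S.card ≤ k ∧
      ∀ x y : Fin n → F, (∀ i ∈ S, x i = y i) → f x = f y)
    (α : Fin n → F)
    (hfc : (∑ x : Fin n → F, ec p (f x - chi α x)) / (Fintype.card (Fin n → F) : ℂ) ≠ 0) :
    ∃ a : F, a ≠ 0 ∧
      1 / (Fintype.card F : ℝ) ^ (k + 1) ≤
        ‖(∑ x : Fin n → F, ec p (a * (f x - chi α x))) /
          (Fintype.card (Fin n → F) : ℂ)‖ := by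
  classical
  obtain ⟨S, hSk, hS⟩ := hjunta
  set q := Fintype.card F with hqdef
  have hq2 : 1 < q := Fintype.one_lt_card
  have hsn : S.card ≤ n := by simpa using S.card_le_univ
  have hcardfun : Fintype.card (Fin n → F) = q ^ n := by
    simp [hqdef]
  -- T ≠ 0
  have hTne : (∑ x : Fin n → F, ec p (f x - chi α x)) ≠ 0 := by
    intro h
    exact hfc (by rw [h, zero_div])
  -- chi under update
  have hchiup : ∀ (x : Fin n → F) (i : Fin n) (v : F),
      chi α (Function.update x i v) = chi α x + α i * (v - x i) := by
    intro x i v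
    have h1 : ∀ y : Fin n → F, chi α y = α i * y i + ∑ j ∈ Finset.univ.erase i, α j * y j := by
      intro y
      rw [chi, ← Finset.add_sum_erase Finset.univ _ (Finset.mem_univ i)]
    rw [h1, h1 x]
    have h2 : ∑ j ∈ Finset.univ.erase i, α j * Function.update x i v j
        = ∑ j ∈ Finset.univ.erase i, α j * x j := by
      refine Finset.sum_congr rfl fun j hj => ?_
      rw [Function.update_of_ne (Finset.ne_of_mem_erase hj)]
    rw [h2, Function.update_self]
    ring
  -- step A : α vanishes outside S
  have hα0 : ∀ i ∉ S, α i = 0 := by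
    intro i hi
    by_contra hai
    obtain ⟨b, hb⟩ := exists_tr p (s := -α i) (neg_ne_zero.2 hai)
    have hne1 : ec p (-α i * b) ≠ 1 := ec_ne_one p hb
    set e : (Fin n → F) ≃ (Fin n → F) :=
      { toFun := fun x => Function.update x i (x i + b)
        invFun := fun x => Function.update x i (x i - b)
        left_inv := by
          intro x
          ext j
          by_cases h : j = i
          · subst h; simp
          · simp [Function.update_of_ne h]
        right_inv := by
          intro x
          ext j
          by_cases h : j = i
          · subst h; simp
          · simp [Function.update_of_ne h] } with he
    have key : ∀ x : Fin n → F,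
        ec p (f (e x) - chi α (e x)) = ec p (f x - chi α x) * ec p (-α i * b) := by
      intro x
      have hf : f (e x) = f x := by
        refine hS _ _ fun j hj => ?_
        have : j ≠ i := fun h => hi (h ▸ hj)
        simp [he, Function.update_of_ne this]
      have hc : chi α (e x) = chi α x + α i * b := by
        have := hchiup x i (x i + b)
        simpa [he] using this
      rw [hf, hc, ← ec_add]
      ring_nf
    have hsum : ∑ x : Fin n → F, ec p (f (e x) - chi α (e x))
        = ∑ x : Fin n → F, ec p (f x - chi α x) :=
      Fintype.sum_equiv e _ _ (fun x => rfl)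
    have hsum2 : ∑ x : Fin n → F, ec p (f (e x) - chi α (e x))
        = ec p (-α i * b) * ∑ x : Fin n → F, ec p (f x - chi α x) := by
      rw [Finset.mul_sum]
      exact Finset.sum_congr rfl fun x _ => by rw [key x, mul_comm]
    have hz : (ec p (-α i * b) - 1) * ∑ x : Fin n → F, ec p (f x - chi α x) = 0 := by
      rw [sub_mul, one_mul, ← hsum2, hsum, sub_self]
    rcases mul_eq_zero.1 hz with h | h
    · exact hne1 (sub_eq_zero.1 h)
    · exact hTne h
  -- g congruence
  have hgc : ∀ x y : Fin n → F, (∀ i ∈ S, x i = y i) → f x - chi α x = f y - chi α y := by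
    intro x y h
    rw [hS x y h]
    congr 1
    rw [chi, chi]
    refine Finset.sum_congr rfl fun j _ => ?_
    by_cases hj : j ∈ S
    · rw [h j hj]
    · simp [hα0 j hj]
  -- counting: fibers are multiples of q^(n - S.card)
  set N : F → ℕ := fun c => (Finset.univ.filter (fun x : Fin n → F => f x - chi α x = c)).card
    with hN
  have hNdvd : ∀ c : F, ∃ M : ℕ, N c = q ^ (n - S.card) * M := by
    intro c
    set E := (Equiv.piEquivPiSubtypeProd (fun i : Fin n => i ∈ S) (fun _ => F)) with hE
    have hagree : ∀ (z : {i : Fin n // i ∈ S} → F) (w : {i : Fin n // ¬ i ∈ S} → F),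
        f (E.symm (z, w)) - chi α (E.symm (z, w))
          = f (E.symm (z, fun _ => 0)) - chi α (E.symm (z, fun _ => 0)) := by
      intro z w
      refine hgc _ _ fun i hi => ?_
      simp [hE, Equiv.piEquivPiSubtypeProd_symm_apply, dif_pos hi]
    refine ⟨(Finset.univ.filter (fun z : {i : Fin n // i ∈ S} → F =>
        f (E.symm (z, fun _ => 0)) - chi α (E.symm (z, fun _ => 0)) = c)).card, ?_⟩
    have h1 : N c = ∑ x : Fin n → F, if f x - chi α x = c then 1 else 0 := by
      simp only [hN, Finset.card_filter]
    have h2 : ∑ x : Fin n → F, (if f x - chi α x = c then 1 else 0)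
        = ∑ zw : ({i : Fin n // i ∈ S} → F) × ({i : Fin n // ¬ i ∈ S} → F),
            (if f (E.symm zw) - chi α (E.symm zw) = c then 1 else 0) := by
      refine Fintype.sum_equiv E _ _ fun x => by simp
    have h3 : ∑ zw : ({i : Fin n // i ∈ S} → F) × ({i : Fin n // ¬ i ∈ S} → F),
            (if f (E.symm zw) - chi α (E.symm zw) = c then 1 else 0)
        = ∑ z : {i : Fin n // i ∈ S} → F, ∑ w : {i : Fin n // ¬ i ∈ S} → F,
            (if f (E.symm (z, fun _ => 0)) - chi α (E.symm (z, fun _ => 0)) = c then 1 else 0) := by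
      rw [Fintype.sum_prod_type]
      exact Finset.sum_congr rfl fun z _ => Finset.sum_congr rfl fun w _ => by rw [hagree]
    have hcardW : Fintype.card ({i : Fin n // ¬ i ∈ S} → F) = q ^ (n - S.card) := by
      rw [Fintype.card_fun]
      congr 1
      rw [Fintype.card_subtype_compl]
      simp
    rw [h1, h2, h3, Finset.card_filter]
    simp only [Finset.sum_const, Finset.card_univ, smul_eq_mul, hcardW, Finset.mul_sum]
  -- exists a non-uniform fiber
  have hex : ∃ c : F, q * N c ≠ q ^ n := by
    by_contra hno
    push_neg at hno
    apply hTne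
    have hfib : ∑ x : Fin n → F, ec p (f x - chi α x) = ∑ c : F, (N c : ℂ) * ec p c := by
      rw [← Finset.sum_fiberwise' Finset.univ (fun x : Fin n → F => f x - chi α x)
        (fun c => ec p c)]
      refine Finset.sum_congr rfl fun c _ => ?_
      rw [Finset.sum_const, hN]
      simp
    have hz : (q : ℂ) * ∑ x : Fin n → F, ec p (f x - chi α x) = 0 := by
      rw [hfib, Finset.mul_sum]
      have : ∀ c : F, (q : ℂ) * ((N c : ℂ) * ec p c) = (q ^ n : ℂ) * ec p c := by
        intro c
        have := hno c
        rw [← mul_assoc]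
        norm_cast
        rw [this]
      rw [Finset.sum_congr rfl fun c _ => this c, ← Finset.mul_sum]
      have hs1 : ∑ c : F, ec p c = 0 := by
        have := sum_ec_zero p (F := F) (s := 1) one_ne_zero
        simpa using this
      rw [hs1, mul_zero]
    have hqne : (q : ℂ) ≠ 0 := Nat.cast_ne_zero.2 (by omega)
    exact (mul_eq_zero.1 hz).resolve_left hqne
  obtain ⟨c, hcne⟩ := hex
  obtain ⟨M, hM⟩ := hNdvd c
  set W : F → ℂ := fun a => ∑ x : Fin n → F, ec p (a * (f x - chi α x)) with hW
  -- orthogonality identity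
  have hkey : ∑ a : F, ec p (-(a * c)) * W a = (q : ℂ) * (N c : ℂ) := by
    have hpt : ∀ (a : F) (x : Fin n → F),
        ec p (a * ((f x - chi α x) - c)) = ec p (-(a * c)) * ec p (a * (f x - chi α x)) := by
      intro a x
      rw [mul_sub, sub_eq_add_neg, ec_add, mul_comm]
    calc ∑ a : F, ec p (-(a * c)) * W a
        = ∑ a : F, ∑ x : Fin n → F, ec p (a * ((f x - chi α x) - c)) := by
          refine Finset.sum_congr rfl fun a _ => ?_
          rw [hW, Finset.mul_sum]
          exact Finset.sum_congr rfl fun x _ => (hpt a x).symm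
      _ = ∑ x : Fin n → F, ∑ a : F, ec p (a * ((f x - chi α x) - c)) := Finset.sum_comm
      _ = ∑ x : Fin n → F, (if (f x - chi α x) - c = 0 then (q : ℂ) else 0) :=
          Finset.sum_congr rfl fun x _ => sum_ec_ite p _
      _ = (q : ℂ) * (N c : ℂ) := by
          rw [Finset.sum_ite, Finset.sum_const, Finset.sum_const_zero, add_zero, hN]
          simp only [sub_eq_zero, nsmul_eq_mul]
          rw [mul_comm]
  have hW0 : ec p (-((0 : F) * c)) * W 0 = ((q : ℕ) : ℂ) ^ n := by
    rw [hW]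
    simp only [zero_mul, neg_zero, ec_zero, one_mul]
    rw [Finset.sum_const, Finset.card_univ, hcardfun]
    push_cast
    ring
  have hrem : ∑ a ∈ Finset.univ.erase (0 : F), ec p (-(a * c)) * W a
      = (q : ℂ) * (N c : ℂ) - ((q : ℕ) : ℂ) ^ n := by
    have h := Finset.add_sum_erase Finset.univ (fun a : F => ec p (-(a * c)) * W a)
      (Finset.mem_univ (0 : F))
    rw [hW0, hkey] at h
    linear_combination h
  -- integer lower bound
  have hzint : (q : ℤ) * (N c : ℤ) - (q : ℤ) ^ n
      = (q : ℤ) ^ (n - S.card) * ((q : ℤ) * (M : ℤ) - (q : ℤ) ^ S.card) := by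
    have hps : (q : ℤ) ^ (n - S.card) * (q : ℤ) ^ S.card = (q : ℤ) ^ n := by
      rw [← pow_add, Nat.sub_add_cancel hsn]
    rw [hM]
    push_cast
    rw [← hps]
    ring
  have hMne : (q : ℤ) * (M : ℤ) - (q : ℤ) ^ S.card ≠ 0 := by
    intro h
    apply hcne
    have h2 : (q : ℤ) * (N c : ℤ) = (q : ℤ) ^ n := by
      have := hzint
      rw [h, mul_zero, sub_eq_zero] at this
      exact this
    exact_mod_cast h2
  have habsZ : ((q : ℤ) ^ (n - S.card) : ℤ) ≤ |(q : ℤ) * (N c : ℤ) - (q : ℤ) ^ n| := by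
    rw [hzint, abs_mul, abs_of_nonneg (by positivity : (0:ℤ) ≤ (q : ℤ) ^ (n - S.card))]
    nlinarith [Int.one_le_abs hMne, (by positivity : (0:ℤ) < (q : ℤ) ^ (n - S.card))]
  have habs : ((q : ℝ)) ^ (n - S.card) ≤ ‖(q : ℂ) * (N c : ℂ) - ((q : ℕ) : ℂ) ^ n‖ := by
    have hcast : (q : ℂ) * (N c : ℂ) - ((q : ℕ) : ℂ) ^ n
        = (((q : ℤ) * (N c : ℤ) - (q : ℤ) ^ n : ℤ) : ℂ) := by
      push_cast
      ring
    rw [hcast, Complex.norm_intCast]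
    have := habsZ
    calc ((q : ℝ)) ^ (n - S.card) = (((q : ℤ) ^ (n - S.card) : ℤ) : ℝ) := by push_cast; ring
      _ ≤ ((|(q : ℤ) * (N c : ℤ) - (q : ℤ) ^ n| : ℤ) : ℝ) := by exact_mod_cast habsZ
      _ = |(((q : ℤ) * (N c : ℤ) - (q : ℤ) ^ n : ℤ) : ℝ)| := by push_cast [Int.cast_abs]; ring_nf
  -- choose maximizing a₀
  obtain ⟨a₀, ha₀A, ha₀max⟩ := Finset.exists_max_image (Finset.univ.erase (0 : F))
    (fun a => ‖W a‖) ⟨1, Finset.mem_erase.2 ⟨one_ne_zero, Finset.mem_univ 1⟩⟩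
  have hb1 : ‖(q : ℂ) * (N c : ℂ) - ((q : ℕ) : ℂ) ^ n‖
      ≤ ((q - 1 : ℕ) : ℝ) * ‖W a₀‖ := by
    rw [← hrem]
    calc ‖∑ a ∈ Finset.univ.erase (0 : F), ec p (-(a * c)) * W a‖
        ≤ ∑ a ∈ Finset.univ.erase (0 : F), ‖ec p (-(a * c)) * W a‖ :=
          norm_sum_le _ _
      _ = ∑ a ∈ Finset.univ.erase (0 : F), ‖W a‖ :=
          Finset.sum_congr rfl fun a _ => by rw [norm_mul, ec_abs, one_mul]
      _ ≤ (Finset.univ.erase (0 : F)).card • ‖W a₀‖ :=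
          Finset.sum_le_card_nsmul _ _ _ fun a ha => ha₀max a ha
      _ = ((q - 1 : ℕ) : ℝ) * ‖W a₀‖ := by
          rw [Finset.card_erase_of_mem (Finset.mem_univ _), Finset.card_univ, nsmul_eq_mul]
  have hcomb : ((q : ℝ)) ^ (n - S.card) ≤ ((q - 1 : ℕ) : ℝ) * ‖W a₀‖ :=
    habs.trans hb1
  refine ⟨a₀, (Finset.mem_erase.1 ha₀A).1, ?_⟩
  rw [norm_div, Complex.norm_natCast, hcardfun]
  have hq1R : (1 : ℝ) ≤ (q : ℝ) := by exact_mod_cast hq2.le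
  have hqposR : (0 : ℝ) < (q : ℝ) := by positivity
  rw [div_le_div_iff₀ (by positivity) (by positivity)]
  push_cast
  have hBnn : 0 ≤ ‖W a₀‖ := norm_nonneg _
  have hqpow : ((q : ℝ)) ^ (n - S.card) * ((q : ℝ)) ^ S.card = ((q : ℝ)) ^ n := by
    rw [← pow_add, Nat.sub_add_cancel hsn]
  have h5 : ((q - 1 : ℕ) : ℝ) ≤ (q : ℝ) := by exact_mod_cast Nat.sub_le q 1
  have h6 : ((q : ℝ)) ^ S.card ≤ ((q : ℝ)) ^ k := pow_le_pow_right₀ hq1R hSk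
  calc (1 : ℝ) * ((q : ℕ) : ℝ) ^ n = ((q : ℝ)) ^ (n - S.card) * ((q : ℝ)) ^ S.card := by
        rw [one_mul, hqpow]
    _ ≤ (((q - 1 : ℕ) : ℝ) * ‖W a₀‖) * ((q : ℝ)) ^ S.card :=
        mul_le_mul_of_nonneg_right hcomb (by positivity)
    _ ≤ ((q : ℝ) * ‖W a₀‖) * ((q : ℝ)) ^ k :=
        mul_le_mul (mul_le_mul_of_nonneg_right h5 hBnn) h6 (by positivity) (by positivity)
    _ = ‖W a₀‖ * ((q : ℕ) : ℝ) ^ (k + 1) := by ring
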